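/- Let ξ_1, ..., ξ_{2s} be the roots (with multiplicity) of a monic polynomial of degree 2s with integer coefficients and nonzero constant term. Then the formal power series F(x) = Σ_{n≥1} n · Π_{j=1}^{2s}(ξ_j^n − 1) · x^n is a rational function of x with integer coefficients. -/

import Mathlib

open Polynomial PowerSeries Finset

/-- Evaluating a symmetric integer polynomial at the roots of a monic integer
polynomial gives an integer. -/
lemma aeval_symm_int {m : ℕ} (ξ : Fin m → ℂ) (R : Polynomial ℤ)
    (hroots : R.map (Int.castRingHom ℂ) =
      ∏ j : Fin m, (Polynomial.X - Polynomial.C (ξ j)))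
    (p : MvPolynomial (Fin m) ℤ) (hp : p.IsSymmetric) :
    ∃ z : ℤ, MvPolynomial.aeval ξ p = (z : ℂ) := by
  have hesymm : ∀ k : ℕ, k ≤ m →
      (MvPolynomial.aeval ξ) (MvPolynomial.esymm (Fin m) ℤ k)
        = (((-1 : ℤ) ^ k * R.coeff (m - k) : ℤ) : ℂ) := by
    intro k hk
    have h1 : (∏ j : Fin m, (Polynomial.X + Polynomial.C (-ξ j))).coeff (m - k)
        = ∑ t ∈ Finset.powersetCard k (Finset.univ : Finset (Fin m)), ∏ i ∈ t, (-ξ i) := by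
      have hc : (m - k) ≤ #(Finset.univ : Finset (Fin m)) := by simp [Nat.sub_le]
      have := Finset.prod_X_add_C_coeff (Finset.univ : Finset (Fin m))
        (fun j => -ξ j) hc
      simpa [Nat.sub_sub_self hk] using this
    have h2 : (∏ j : Fin m, (Polynomial.X + Polynomial.C (-ξ j)))
        = R.map (Int.castRingHom ℂ) := by
      rw [hroots]; congr 1; funext j; rw [map_neg, sub_eq_add_neg]
    have h3 : ∀ t ∈ Finset.powersetCard k (Finset.univ : Finset (Fin m)),
        (∏ i ∈ t, (-ξ i)) = (-1 : ℂ) ^ k * ∏ i ∈ t, ξ i := by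
      intro t ht
      rw [Finset.mem_powersetCard] at ht
      calc ∏ i ∈ t, (-ξ i) = ∏ i ∈ t, ((-1 : ℂ) * ξ i) := by
            exact Finset.prod_congr rfl fun i _ => by ring
        _ = (-1 : ℂ) ^ (#t) * ∏ i ∈ t, ξ i := by
            rw [Finset.prod_mul_distrib, Finset.prod_const]
        _ = (-1 : ℂ) ^ k * ∏ i ∈ t, ξ i := by rw [ht.2]
    have h4 : ((R.coeff (m - k) : ℤ) : ℂ)
        = (-1 : ℂ) ^ k * ∑ t ∈ Finset.powersetCard k (Finset.univ : Finset (Fin m)),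
            ∏ i ∈ t, ξ i := by
      rw [Finset.sum_congr rfl h3, ← Finset.mul_sum] at h1
      rw [← h1, h2, Polynomial.coeff_map]
      simp
    have h5 : (MvPolynomial.aeval ξ) (MvPolynomial.esymm (Fin m) ℤ k)
        = ∑ t ∈ Finset.powersetCard k (Finset.univ : Finset (Fin m)), ∏ i ∈ t, ξ i := by
      simp [MvPolynomial.esymm, map_sum, map_prod]
    rw [h5]
    push_cast
    rw [h4, ← mul_assoc, ← mul_pow]
    norm_num
  obtain ⟨q, hq⟩ := MvPolynomial.esymmAlgHom_surjective (σ := Fin m) (R := ℤ) (n := m)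
    (by simp) ⟨p, hp⟩
  have hqval : MvPolynomial.aeval
      (fun i : Fin m => MvPolynomial.esymm (Fin m) ℤ ((i : ℕ) + 1)) q = p := by
    have := congrArg Subtype.val hq
    rwa [MvPolynomial.esymmAlgHom_apply] at this
  set zf : Fin m → ℤ := fun i => (-1 : ℤ) ^ ((i : ℕ) + 1) * R.coeff (m - ((i : ℕ) + 1)) with hzf
  refine ⟨MvPolynomial.eval zf q, ?_⟩
  have hcomp : MvPolynomial.aeval ξ p
      = MvPolynomial.aeval (fun i : Fin m =>
          MvPolynomial.aeval ξ (MvPolynomial.esymm (Fin m) ℤ ((i : ℕ) + 1))) q := by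
    rw [← hqval]
    exact MvPolynomial.comp_aeval_apply
      (f := fun i : Fin m => MvPolynomial.esymm (Fin m) ℤ ((i : ℕ) + 1))
      (MvPolynomial.aeval ξ) q
  rw [hcomp]
  have heq : (fun i : Fin m =>
      MvPolynomial.aeval ξ (MvPolynomial.esymm (Fin m) ℤ ((i : ℕ) + 1)))
      = fun i : Fin m => ((zf i : ℤ) : ℂ) := by
    funext i
    exact hesymm ((i : ℕ) + 1) i.2
  rw [heq]
  -- aeval at integer-cast values is the cast of eval
  have h := MvPolynomial.eval₂_comp_left (Int.castRingHom ℂ) (RingHom.id ℤ) zf q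
  simp only [RingHom.comp_id] at h
  rw [MvPolynomial.aeval_def]
  exact h.symm

/-- The product over all subsets `T` of `(1 - (∏_{j∈T} X_j)·x)`, as a polynomial in `x`
with coefficients in the multivariate polynomial ring. -/
noncomputable def Psi (m : ℕ) : Polynomial (MvPolynomial (Fin m) ℤ) :=
  ∏ T : Finset (Fin m), (1 - Polynomial.C (∏ j ∈ T, MvPolynomial.X j) * Polynomial.X)

lemma Psi_coeff_symm (m k : ℕ) : ((Psi m).coeff k).IsSymmetric := by
  intro e
  have hmap : (Psi m).map (MvPolynomial.rename e).toRingHom = Psi m := by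
    unfold Psi
    rw [Polynomial.map_prod]
    have step : ∀ T : Finset (Fin m),
        ((1 - Polynomial.C (∏ j ∈ T, MvPolynomial.X (R := ℤ) j) * Polynomial.X).map
          (MvPolynomial.rename e).toRingHom)
        = 1 - Polynomial.C (∏ j ∈ (Equiv.finsetCongr e) T, MvPolynomial.X (R := ℤ) j) *
            Polynomial.X := by
      intro T
      rw [Polynomial.map_sub, Polynomial.map_one, Polynomial.map_mul, Polynomial.map_C,
        Polynomial.map_X]
      have hren : (MvPolynomial.rename e).toRingHom (∏ j ∈ T, MvPolynomial.X (R := ℤ) j)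
          = ∏ j ∈ (Equiv.finsetCongr e) T, MvPolynomial.X (R := ℤ) j := by
        show (MvPolynomial.rename (R := ℤ) e) (∏ j ∈ T, MvPolynomial.X (R := ℤ) j)
            = ∏ j ∈ (Equiv.finsetCongr e) T, MvPolynomial.X (R := ℤ) j
        rw [map_prod]
        simp only [MvPolynomial.rename_X]
        rw [Equiv.finsetCongr_apply, Finset.prod_map]
        rfl
      rw [hren]
    rw [Finset.prod_congr rfl fun T _ => step T]
    exact Equiv.prod_comp (Equiv.finsetCongr e)
      (fun T => 1 - Polynomial.C (∏ j ∈ T, MvPolynomial.X (R := ℤ) j) * Polynomial.X)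
  conv_rhs => rw [← hmap]
  rw [Polynomial.coeff_map]
  rfl

lemma prod_pow_sub_one_symm (m n : ℕ) :
    (∏ j : Fin m, ((MvPolynomial.X j : MvPolynomial (Fin m) ℤ) ^ n - 1)).IsSymmetric := by
  intro e
  rw [map_prod]
  simp only [map_sub, map_pow, MvPolynomial.rename_X, map_one]
  exact Equiv.prod_comp e fun j => (MvPolynomial.X j : MvPolynomial (Fin m) ℤ) ^ n - 1

theorem generating_function_rational (s : ℕ) (R : Polynomial ℤ) (hmonic : R.Monic)
    (hdeg : R.natDegree = 2 * s) (h0 : R.eval 0 ≠ 0)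
    (ξ : Fin (2 * s) → ℂ)
    (hroots : R.map (Int.castRingHom ℂ) =
      ∏ j : Fin (2 * s), (Polynomial.X - Polynomial.C (ξ j))) :
    ∃ P Q : Polynomial ℤ, Q ≠ 0 ∧
      (PowerSeries.mk fun n => (n : ℂ) * ∏ j : Fin (2 * s), (ξ j ^ n - 1)) *
        ((Q.map (Int.castRingHom ℂ)) : PowerSeries ℂ) =
        ((P.map (Int.castRingHom ℂ)) : PowerSeries ℂ) := by
  -- each coefficient ∏ (ξ_j^n - 1) is an integer
  have hInt : ∀ n : ℕ, ∃ z : ℤ, (∏ j : Fin (2 * s), (ξ j ^ n - 1)) = (z : ℂ) := by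
    intro n
    have h := aeval_symm_int ξ R hroots
      (∏ j : Fin (2 * s), ((MvPolynomial.X j : MvPolynomial (Fin (2 * s)) ℤ) ^ n - 1))
      (prod_pow_sub_one_symm (2 * s) n)
    simpa [map_prod, map_sub, map_pow, MvPolynomial.aeval_X, map_one] using h
  choose b hb using hInt
  set E : Finset (Fin (2 * s)) → ℂ := fun T => ∏ j ∈ T, ξ j with hE
  set Qc : Polynomial ℂ :=
    ∏ T : Finset (Fin (2 * s)), (1 - Polynomial.C (E T) * Polynomial.X) with hQc
  have hQcPsi : Qc = (Psi (2 * s)).map (MvPolynomial.aeval ξ).toRingHom := by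
    unfold Psi
    rw [Polynomial.map_prod, hQc]
    refine Finset.prod_congr rfl fun T _ => ?_
    rw [Polynomial.map_sub, Polynomial.map_one, Polynomial.map_mul, Polynomial.map_C,
      Polynomial.map_X]
    have hev : (MvPolynomial.aeval (R := ℤ) ξ).toRingHom (∏ j ∈ T, MvPolynomial.X j) = E T := by
      show (MvPolynomial.aeval (R := ℤ) ξ) (∏ j ∈ T, MvPolynomial.X j) = E T
      rw [map_prod]
      simp [hE, MvPolynomial.aeval_X]
    rw [hev]
  obtain ⟨Q0, hQ0⟩ : ∃ Q0 : Polynomial ℤ, Q0.map (Int.castRingHom ℂ) = Qc := by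
    rw [← Polynomial.mem_lifts, Polynomial.lifts_iff_coeff_lifts]
    intro n
    rw [hQcPsi, Polynomial.coeff_map]
    obtain ⟨z, hz⟩ := aeval_symm_int ξ R hroots ((Psi (2 * s)).coeff n)
      (Psi_coeff_symm (2 * s) n)
    exact ⟨z, hz.symm⟩
  have hQc0 : Qc.eval 0 = 1 := by
    rw [hQc, Polynomial.eval_prod]; simp
  have hQ0ne : Q0 ≠ 0 := by
    intro h
    rw [h, Polynomial.map_zero] at hQ0
    rw [← hQ0] at hQc0
    simp at hQc0
  -- geometric series
  have geom : ∀ c : ℂ, (PowerSeries.mk fun n => c ^ n) *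
      (1 - PowerSeries.C c * PowerSeries.X) = 1 := by
    intro c
    have hexp : (PowerSeries.mk fun n => c ^ n) * (1 - PowerSeries.C c * PowerSeries.X)
        = (PowerSeries.mk fun n => c ^ n)
          - PowerSeries.C c * ((PowerSeries.mk fun n => c ^ n) * PowerSeries.X) := by ring
    ext n
    rw [hexp, map_sub, PowerSeries.coeff_C_mul]
    cases n with
    | zero => simp
    | succ n =>
      rw [PowerSeries.coeff_succ_mul_X]
      simp [PowerSeries.coeff_mk, pow_succ, mul_comm]
  set G : PowerSeries ℂ := PowerSeries.mk fun n => ∏ j : Fin (2 * s), (ξ j ^ n - 1) with hG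
  set w : Finset (Fin (2 * s)) → ℂ := fun T => (-1 : ℂ) ^ (#(Finset.univ \ T)) with hw
  have hGsum : G = ∑ T : Finset (Fin (2 * s)),
      PowerSeries.C (w T) * PowerSeries.mk fun n => (E T) ^ n := by
    ext n
    rw [hG, PowerSeries.coeff_mk, map_sum]
    have expand : (∏ j : Fin (2 * s), (ξ j ^ n - 1))
        = ∑ T ∈ (Finset.univ : Finset (Fin (2 * s))).powerset,
            (∏ j ∈ T, ξ j ^ n) * (-1 : ℂ) ^ (#(Finset.univ \ T)) := by
      have h := Finset.prod_add (fun j : Fin (2 * s) => ξ j ^ n) (fun _ => (-1 : ℂ)) Finset.univ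
      simp only [Finset.prod_const] at h
      calc ∏ j : Fin (2 * s), (ξ j ^ n - 1) = ∏ j : Fin (2 * s), (ξ j ^ n + (-1)) :=
            Finset.prod_congr rfl fun j _ => by ring
        _ = _ := h
    rw [expand, Finset.powerset_univ]
    refine Finset.sum_congr rfl fun T _ => ?_
    rw [PowerSeries.coeff_C_mul, PowerSeries.coeff_mk, hE, hw, ← Finset.prod_pow]
    ring
  set Fac : Finset (Fin (2 * s)) → PowerSeries ℂ :=
    fun T => 1 - PowerSeries.C (E T) * PowerSeries.X with hFac
  have hQcast : ((Qc : Polynomial ℂ) : PowerSeries ℂ) = ∏ T : Finset (Fin (2 * s)), Fac T := by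
    rw [hQc, ← Polynomial.coeToPowerSeries.ringHom_apply, map_prod]
    refine Finset.prod_congr rfl fun T _ => ?_
    rw [Polynomial.coeToPowerSeries.ringHom_apply]
    push_cast [Polynomial.coe_sub, Polynomial.coe_one, Polynomial.coe_mul, Polynomial.coe_C,
      Polynomial.coe_X]
    rfl
  set Pc : Polynomial ℂ := ∑ T : Finset (Fin (2 * s)), Polynomial.C (w T) *
      ∏ T' ∈ Finset.univ.erase T, (1 - Polynomial.C (E T') * Polynomial.X) with hPc
  have hPcast : ((Pc : Polynomial ℂ) : PowerSeries ℂ)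
      = ∑ T : Finset (Fin (2 * s)), PowerSeries.C (w T) *
          ∏ T' ∈ Finset.univ.erase T, Fac T' := by
    rw [hPc, ← Polynomial.coeToPowerSeries.ringHom_apply, map_sum]
    refine Finset.sum_congr rfl fun T _ => ?_
    rw [map_mul, map_prod]
    congr 1
    · rw [Polynomial.coeToPowerSeries.ringHom_apply, Polynomial.coe_C]
    · refine Finset.prod_congr rfl fun T' _ => ?_
      rw [Polynomial.coeToPowerSeries.ringHom_apply]
      push_cast [Polynomial.coe_sub, Polynomial.coe_one, Polynomial.coe_mul, Polynomial.coe_C,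
        Polynomial.coe_X]
      rfl
  have hGQ : G * ((Qc : Polynomial ℂ) : PowerSeries ℂ)
      = ((Pc : Polynomial ℂ) : PowerSeries ℂ) := by
    rw [hGsum, hQcast, hPcast, Finset.sum_mul]
    refine Finset.sum_congr rfl fun T _ => ?_
    rw [← Finset.mul_prod_erase Finset.univ Fac (Finset.mem_univ T)]
    have hre : PowerSeries.C (w T) * (PowerSeries.mk fun n => (E T) ^ n) *
        (Fac T * ∏ T' ∈ Finset.univ.erase T, Fac T')
        = PowerSeries.C (w T) *
          (((PowerSeries.mk fun n => (E T) ^ n) * Fac T) *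
            ∏ T' ∈ Finset.univ.erase T, Fac T') := by ring
    rw [hre, hFac]
    rw [geom (E T), one_mul]
  obtain ⟨P0, hP0⟩ : ∃ P0 : Polynomial ℤ, P0.map (Int.castRingHom ℂ) = Pc := by
    rw [← Polynomial.mem_lifts, Polynomial.lifts_iff_coeff_lifts]
    intro n
    have hcoe : Pc.coeff n = PowerSeries.coeff n ((Pc : Polynomial ℂ) : PowerSeries ℂ) :=
      (Polynomial.coeff_coe Pc n).symm
    rw [hcoe, ← hGQ, PowerSeries.coeff_mul]
    refine ⟨∑ p ∈ Finset.HasAntidiagonal.antidiagonal n, b p.1 * Q0.coeff p.2, ?_⟩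
    rw [map_sum]
    refine Finset.sum_congr rfl fun p _ => ?_
    rw [map_mul]
    have h1 : (PowerSeries.coeff p.1) G = ((b p.1 : ℤ) : ℂ) := by
      rw [hG, PowerSeries.coeff_mk, hb p.1]
    have h2 : (PowerSeries.coeff p.2) ((Qc : Polynomial ℂ) : PowerSeries ℂ)
        = ((Q0.coeff p.2 : ℤ) : ℂ) := by
      rw [Polynomial.coeff_coe, ← hQ0, Polynomial.coeff_map]
      rfl
    rw [h1, h2]
    rfl
  refine ⟨Polynomial.X * (Polynomial.derivative P0 * Q0 - P0 * Polynomial.derivative Q0),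
          Q0 ^ 2, pow_ne_zero 2 hQ0ne, ?_⟩
  -- F = derivativeFun G * X
  have hdf' : ∀ f : PowerSeries ℂ, f.derivativeFun = PowerSeries.derivative ℂ f := fun _ => rfl
  have hF : (PowerSeries.mk fun n => (n : ℂ) * ∏ j : Fin (2 * s), (ξ j ^ n - 1))
      = G.derivativeFun * PowerSeries.X := by
    ext n
    cases n with
    | zero => simp
    | succ n =>
      rw [PowerSeries.coeff_succ_mul_X, hdf', PowerSeries.coeff_derivative,
        PowerSeries.coeff_mk, hG, PowerSeries.coeff_mk]
      push_cast
      ring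
  have hDer := congrArg PowerSeries.derivativeFun hGQ
  rw [PowerSeries.derivativeFun_mul, hdf' (Qc : PowerSeries ℂ), PowerSeries.derivativeFun_coe] at hDer
  simp only [smul_eq_mul] at hDer
  rw [hdf' (Pc : PowerSeries ℂ), PowerSeries.derivativeFun_coe] at hDer
  have hQmap : (((Q0 ^ 2).map (Int.castRingHom ℂ) : Polynomial ℂ) : PowerSeries ℂ)
      = ((Qc : Polynomial ℂ) : PowerSeries ℂ) ^ 2 := by
    rw [Polynomial.map_pow, hQ0, ← Polynomial.coeToPowerSeries.ringHom_apply, map_pow]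
    rfl
  have hPmap : ((((Polynomial.X * (Polynomial.derivative P0 * Q0
        - P0 * Polynomial.derivative Q0)).map (Int.castRingHom ℂ)) : Polynomial ℂ)
          : PowerSeries ℂ)
      = PowerSeries.X * (((Polynomial.derivative Pc : Polynomial ℂ) : PowerSeries ℂ) *
          ((Qc : Polynomial ℂ) : PowerSeries ℂ)
        - ((Pc : Polynomial ℂ) : PowerSeries ℂ) *
          ((Polynomial.derivative Qc : Polynomial ℂ) : PowerSeries ℂ)) := by
    rw [Polynomial.map_mul, Polynomial.map_sub, Polynomial.map_mul, Polynomial.map_mul,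
      Polynomial.map_X, ← Polynomial.derivative_map, ← Polynomial.derivative_map, hP0, hQ0]
    push_cast [Polynomial.coe_mul, Polynomial.coe_sub, Polynomial.coe_X]
    rfl
  rw [hF, hQmap, hPmap]
  linear_combination (PowerSeries.X * ((Qc : Polynomial ℂ) : PowerSeries ℂ)) * hDer
    - (PowerSeries.X * ((Polynomial.derivative Qc : Polynomial ℂ) : PowerSeries ℂ)) * hGQ
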